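/- The mass matrix of each mPDeC correction step, given by M_{ii} = 1 + Δt Σ_{r=0}^M Σ_l (θ_r^m / c_i^{m,(k-1)}) (d_{i,l}(c^{r,(k-1)}) 1_{θ_r^m>0} − p_{i,l}(c^{r,(k-1)}) 1_{θ_r^m<0}) and M_{ij} = −Δt Σ_{r=0}^M (θ_r^m / c_j^{m,(k-1)}) (p_{i,j}(c^{r,(k-1)}) 1_{θ_r^m>0} − d_{i,j}(c^{r,(k-1)}) 1_{θ_r^m<0}) for i ≠ j, has positive diagonal entries, nonpositive off-diagonal entries, and is strictly diagonally dominant by columns. -/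

import Mathlib

/-- The mass matrix of each mPDeC correction step has positive diagonal, nonpositive
off-diagonal entries, and is strictly diagonally dominant by columns. -/
theorem mPDeC_mass_matrix_properties
    (Ms I : ℕ) (θ : Fin (Ms + 1) → ℝ) (Δt : ℝ) (hΔt : 0 < Δt)
    (p d : (Fin I → ℝ) → Fin I → Fin I → ℝ)
    (hp : ∀ c i j, 0 ≤ p c i j) (hd : ∀ c i j, 0 ≤ d c i j)
    (hcons : ∀ c i j, p c i j = d c j i)
    (hdiagp : ∀ c i, p c i i = 0) (hdiagd : ∀ c i, d c i i = 0)
    (cm : Fin I → ℝ) (hcm : ∀ i, 0 < cm i)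
    (cr : Fin (Ms + 1) → Fin I → ℝ) (hcr : ∀ r i, 0 < cr r i)
    (A : Matrix (Fin I) (Fin I) ℝ)
    (hA : ∀ i j, A i j =
      if i = j then
        1 + Δt * ∑ r, ∑ l, (θ r / cm i) *
          ((if 0 < θ r then d (cr r) i l else 0) - (if θ r < 0 then p (cr r) i l else 0))
      else
        -(Δt * ∑ r, (θ r / cm j) *
          ((if 0 < θ r then p (cr r) i j else 0) - (if θ r < 0 then d (cr r) i j else 0)))) :
    (∀ i, 0 < A i i) ∧ (∀ i j, i ≠ j → A i j ≤ 0) ∧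
      ∀ j, ∑ i ∈ Finset.univ.erase j, |A i j| < A j j := by
  have hterm : ∀ (t X Y : ℝ), 0 ≤ X → 0 ≤ Y →
      0 ≤ t * ((if 0 < t then X else 0) - (if t < 0 then Y else 0)) := by
    intro t X Y hX hY
    rcases lt_trichotomy t 0 with h | h | h
    · rw [if_neg (not_lt.mpr h.le), if_pos h]
      nlinarith
    · simp [h]
    · rw [if_pos h, if_neg (not_lt.mpr h.le)]
      nlinarith
  have hdiv : ∀ (t c X Y : ℝ), 0 < c → 0 ≤ X → 0 ≤ Y →
      0 ≤ (t / c) * ((if 0 < t then X else 0) - (if t < 0 then Y else 0)) := by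
    intro t c X Y hc hX hY
    rw [div_mul_eq_mul_div]
    exact div_nonneg (hterm t X Y hX hY) hc.le
  have h1 : ∀ i, 0 < A i i := by
    intro i
    rw [hA, if_pos rfl]
    have hS : 0 ≤ ∑ r, ∑ l, (θ r / cm i) *
        ((if 0 < θ r then d (cr r) i l else 0) - (if θ r < 0 then p (cr r) i l else 0)) := by
      refine Finset.sum_nonneg fun r _ => Finset.sum_nonneg fun l _ => ?_
      exact hdiv (θ r) (cm i) _ _ (hcm i) (hd _ i l) (hp _ i l)
    nlinarith
  have h2 : ∀ i j, i ≠ j → A i j ≤ 0 := by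
    intro i j hij
    rw [hA, if_neg hij]
    have hS : 0 ≤ ∑ r, (θ r / cm j) *
        ((if 0 < θ r then p (cr r) i j else 0) - (if θ r < 0 then d (cr r) i j else 0)) := by
      refine Finset.sum_nonneg fun r _ => ?_
      exact hdiv (θ r) (cm j) _ _ (hcm j) (hp _ i j) (hd _ i j)
    nlinarith
  refine ⟨h1, h2, fun j => ?_⟩
  have key : ∑ i ∈ Finset.univ.erase j, |A i j| = A j j - 1 := by
    have habs : ∀ i ∈ Finset.univ.erase j, |A i j| = -(A i j) := by
      intro i hi
      exact abs_of_nonpos (h2 i j (Finset.ne_of_mem_erase hi))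
    rw [Finset.sum_congr rfl habs]
    have hval : ∀ i ∈ Finset.univ.erase j, -(A i j) =
        Δt * ∑ r, (θ r / cm j) *
          ((if 0 < θ r then p (cr r) i j else 0) - (if θ r < 0 then d (cr r) i j else 0)) := by
      intro i hi
      rw [hA, if_neg (Finset.ne_of_mem_erase hi), neg_neg]
    rw [Finset.sum_congr rfl hval, hA j j, if_pos rfl, add_sub_cancel_left,
      ← Finset.mul_sum, Finset.sum_comm]
    congr 1
    refine Finset.sum_congr rfl fun r _ => ?_
    have hj0 : (θ r / cm j) *
        ((if 0 < θ r then d (cr r) j j else 0) - (if θ r < 0 then p (cr r) j j else 0)) = 0 := by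
      simp only [hdiagp, hdiagd]; simp
    have hsub : ∑ l ∈ Finset.univ.erase j, (θ r / cm j) *
          ((if 0 < θ r then d (cr r) j l else 0) - (if θ r < 0 then p (cr r) j l else 0))
        = ∑ l, (θ r / cm j) *
          ((if 0 < θ r then d (cr r) j l else 0) - (if θ r < 0 then p (cr r) j l else 0)) :=
      Finset.sum_erase Finset.univ hj0
    rw [← hsub]
    refine Finset.sum_congr rfl fun i hi => ?_
    rw [hcons (cr r) i j]
    have : d (cr r) i j = p (cr r) j i := (hcons (cr r) j i).symm
    rw [this]
  rw [key]
  linarith
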